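/- Let L₂(w) = (1/2)‖Xw − y‖₂² + ε‖w‖₂‖Xw − y‖₁ + (ε²n/2)‖w‖₂² for ε > 0. Then L₂ is a convex function on ℝᵈ. -/

import Mathlib

open Finset

/-- The L₂-adversarial training objective for least-squares linear regression. -/
noncomputable def advLoss {n d : ℕ} (X : Matrix (Fin n) (Fin d) ℝ)
    (y : Fin n → ℝ) (ε : ℝ) (w : EuclideanSpace ℝ (Fin d)) : ℝ :=
  (1 / 2) * ∑ i, (X.mulVec w i - y i) ^ 2 +
    ε * ‖w‖ * ∑ i, |X.mulVec w i - y i| +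
    ε ^ 2 * n / 2 * ‖w‖ ^ 2

lemma advLoss_eq {n d : ℕ} (X : Matrix (Fin n) (Fin d) ℝ) (y : Fin n → ℝ)
    (ε : ℝ) (w : EuclideanSpace ℝ (Fin d)) :
    advLoss X y ε w = ∑ i, (1 / 2) * (|X.mulVec w i - y i| + ε * ‖w‖) ^ 2 := by
  unfold advLoss
  have : ∀ i : Fin n, (1 / 2 : ℝ) * (|X.mulVec w i - y i| + ε * ‖w‖) ^ 2
      = (1/2) * (X.mulVec w i - y i) ^ 2 + ε * ‖w‖ * |X.mulVec w i - y i|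
        + (1/2) * (ε * ‖w‖) ^ 2 := by
    intro i; rw [add_sq, sq_abs]; ring
  rw [Finset.sum_congr rfl fun i _ => this i]
  simp [Finset.sum_add_distrib, Finset.mul_sum, Finset.sum_const]
  ring

lemma convexOn_finset_sum {ι : Type*} {E : Type*} [AddCommGroup E] [Module ℝ E]
    (t : Finset ι) (g : ι → E → ℝ) (h : ∀ i ∈ t, ConvexOn ℝ Set.univ (g i)) :
    ConvexOn ℝ Set.univ (fun w => ∑ i ∈ t, g i w) := by
  classical
  induction t using Finset.induction with
  | empty => simpa using convexOn_const (0:ℝ) convex_univ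
  | insert _ _ hnotmem ih =>
    simp only [Finset.sum_insert hnotmem]
    exact (h _ (Finset.mem_insert_self _ _)).add
      (ih fun i hi => h i (Finset.mem_insert_of_mem hi))

lemma convexOn_sq_of_nonneg {E : Type*} [AddCommGroup E] [Module ℝ E] {f : E → ℝ}
    (hf : ConvexOn ℝ Set.univ f) (h0 : ∀ x, 0 ≤ f x) :
    ConvexOn ℝ Set.univ (fun x => f x ^ 2) := by
  refine ⟨convex_univ, fun x _ y _ a b ha hb hab => ?_⟩
  have h1 : f (a • x + b • y) ≤ a * f x + b * f y := hf.2 trivial trivial ha hb hab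
  have h2 : f (a • x + b • y) ^ 2 ≤ (a * f x + b * f y) ^ 2 :=
    pow_le_pow_left₀ (h0 _) h1 2
  have h3 : (a * f x + b * f y) ^ 2 ≤ a * f x ^ 2 + b * f y ^ 2 := by
    nlinarith [mul_nonneg ha hb, sq_nonneg (f x - f y)]
  calc (fun x => f x ^ 2) (a • x + b • y) = f (a • x + b • y) ^ 2 := rfl
    _ ≤ a * f x ^ 2 + b * f y ^ 2 := h2.trans h3
    _ = a • (fun x => f x ^ 2) x + b • (fun x => f x ^ 2) y := by simp [smul_eq_mul]

lemma term_convex {n d : ℕ} (X : Matrix (Fin n) (Fin d) ℝ) (y : Fin n → ℝ)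
    (ε : ℝ) (hε : 0 < ε) (i : Fin n) :
    ConvexOn ℝ Set.univ
      (fun w : EuclideanSpace ℝ (Fin d) => |X.mulVec w i - y i| + ε * ‖w‖) := by
  have h1 : ConvexOn ℝ Set.univ
      (fun w : EuclideanSpace ℝ (Fin d) => |X.mulVec w i - y i|) := by
    have habs : ConvexOn ℝ Set.univ (fun x : ℝ => |x|) := by
      exact (convexOn_univ_norm (E := ℝ))
    let L : EuclideanSpace ℝ (Fin d) →ₗ[ℝ] ℝ :=
      ((LinearMap.proj i).comp X.mulVecLin).comp (WithLp.linearEquiv 2 ℝ (Fin d → ℝ)).toLinearMap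
    let A : EuclideanSpace ℝ (Fin d) →ᵃ[ℝ] ℝ :=
      { toFun := fun w => X.mulVec w i - y i
        linear := L
        map_vadd' := by
          intro p v
          have h : X.mulVec ((v : Fin d → ℝ) + (p : Fin d → ℝ)) i
              = X.mulVec v i + X.mulVec p i := by
            rw [Matrix.mulVec_add]; rfl
          show X.mulVec (v + p) i - y i = X.mulVec v i + (X.mulVec p i - y i)
          rw [h]; ring }
    have := habs.comp_affineMap A
    exact this
  have h2 : ConvexOn ℝ Set.univ
      (fun w : EuclideanSpace ℝ (Fin d) => ε * ‖w‖) :=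
    (convexOn_univ_norm (E := EuclideanSpace ℝ (Fin d))).smul hε.le
  exact h1.add h2

/-- L₂ is a convex function on ℝᵈ. -/
theorem stmt_17 {n d : ℕ} (X : Matrix (Fin n) (Fin d) ℝ) (y : Fin n → ℝ)
    (ε : ℝ) (hε : 0 < ε) :
    ConvexOn ℝ Set.univ (advLoss X y ε) := by
  have : ConvexOn ℝ Set.univ
      (fun w : EuclideanSpace ℝ (Fin d) =>
        ∑ i, (1 / 2 : ℝ) * (|X.mulVec w i - y i| + ε * ‖w‖) ^ 2) := by
    apply convexOn_finset_sum
    intro i _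
    have hc := term_convex X y ε hε i
    have hpos : ∀ w : EuclideanSpace ℝ (Fin d),
        0 ≤ |X.mulVec w i - y i| + ε * ‖w‖ := fun w =>
      add_nonneg (abs_nonneg _) (mul_nonneg hε.le (norm_nonneg _))
    have := (convexOn_sq_of_nonneg hc hpos).smul (by norm_num : (0:ℝ) ≤ 1/2)
    simpa [smul_eq_mul] using this
  convert this using 1
  funext w
  exact advLoss_eq X y ε w
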